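/- Let k ≥ 1, t ≥ 1, and κ ≥ 0 be integers with t ≤ k, and let a₁ ≥ a₂ ≥ … ≥ a_t be integers such that a₁ = k, a_t > κ, and a_i − a_{i+1} ∈ {0,1} for all 1 ≤ i < t. Then Σ_{i=1}^t 1/a_i ≤ 1 + ln(k/(κ+1)). -/

import Mathlib

open Finset

/-- The sequence can drop by at most one per step, so `k = a 1 < a t + t`. -/
lemma aux_lower (k t : ℕ) (a : ℕ → ℕ) (ha1 : a 1 = k) (ht : 1 ≤ t)
    (hstep : ∀ i, 1 ≤ i → i < t → a i = a (i + 1) ∨ a i = a (i + 1) + 1) :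
    k < a t + t := by
  induction t, ht using Nat.le_induction with
  | base => omega
  | succ n hn ih =>
    have h1 := hstep n (by omega) (by omega)
    have h2 : k < a n + n := ih (fun i h1 h2 => hstep i h1 (by omega))
    omega

/-- Harmonic sum tail bound: `Σ_{v=s+1}^{k} 1/v ≤ log k - log s`. -/
lemma aux_log (s : ℕ) (hs : 1 ≤ s) : ∀ k : ℕ, s ≤ k →
    ∑ v ∈ Icc (s + 1) k, (1 : ℝ) / v ≤ Real.log k - Real.log s := by
  intro k hk
  induction k, hk using Nat.le_induction with
  | base =>
    rw [Finset.Icc_eq_empty (by omega)]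
    simp
  | succ n hn ih =>
    rw [Finset.sum_Icc_succ_top (by omega)]
    have hn0 : (0 : ℝ) < n := by
      have : 1 ≤ n := le_trans hs hn
      exact_mod_cast this
    have hn1 : (0 : ℝ) < (n : ℝ) + 1 := by positivity
    have key : (1 : ℝ) / ((n : ℝ) + 1) ≤ Real.log ((n : ℝ) + 1) - Real.log n := by
      have h := Real.log_le_sub_one_of_pos (x := (n : ℝ) / ((n : ℝ) + 1)) (by positivity)
      rw [Real.log_div (ne_of_gt hn0) (ne_of_gt hn1)] at h
      have : (n : ℝ) / ((n : ℝ) + 1) - 1 = -(1 / ((n : ℝ) + 1)) := by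
        field_simp
        ring
      rw [this] at h
      linarith
    push_cast
    linarith

/-- Main structural bound: `Σ_{i=1}^t 1/aᵢ ≤ (t + a t - k)/(a t) + Σ_{v=a t + 1}^{k} 1/v`. -/
lemma aux_main (k : ℕ) (a : ℕ → ℕ) (ha1 : a 1 = k) :
    ∀ t : ℕ, 1 ≤ t →
    (∀ i j, 1 ≤ i → i ≤ j → j ≤ t → a j ≤ a i) →
    (∀ i, 1 ≤ i → i ≤ t → 1 ≤ a i) →
    (∀ i, 1 ≤ i → i < t → a i = a (i + 1) ∨ a i = a (i + 1) + 1) →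
    ∑ i ∈ Icc 1 t, (1 : ℝ) / (a i : ℝ) ≤
      ((t : ℝ) + (a t : ℝ) - (k : ℝ)) / (a t : ℝ) +
        ∑ v ∈ Icc (a t + 1) k, (1 : ℝ) / (v : ℝ) := by
  intro t ht
  induction t, ht using Nat.le_induction with
  | base =>
    intro _ hpos _
    have hk1 : 1 ≤ k := ha1 ▸ hpos 1 le_rfl le_rfl
    have hk0 : (0 : ℝ) < (k : ℝ) := by exact_mod_cast hk1
    have he : Finset.Icc (a 1 + 1) k = ∅ := Finset.Icc_eq_empty (by omega)
    rw [he, show Finset.Icc 1 1 = {1} from rfl]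
    simp only [Finset.sum_singleton, Finset.sum_empty, add_zero, ha1]
    push_cast
    rw [show (1 : ℝ) + (k : ℝ) - (k : ℝ) = 1 by ring]
  | succ n hn ih =>
    intro hmono hpos hstep
    have ihh := ih (fun i j h1 h2 h3 => hmono i j h1 h2 (by omega))
      (fun i h1 h2 => hpos i h1 (by omega))
      (fun i h1 h2 => hstep i h1 (by omega))
    rw [Finset.sum_Icc_succ_top (by omega)]
    have hstepn := hstep n (by omega) (by omega)
    have hposn : 1 ≤ a n := hpos n (by omega) (by omega)
    have hposn1 : 1 ≤ a (n + 1) := hpos (n + 1) (by omega) le_rfl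
    have hank : a n ≤ k := ha1 ▸ hmono 1 n le_rfl (by omega) (by omega)
    have hlow : k < a n + n := aux_lower k n a ha1 hn
      (fun i h1 h2 => hstep i h1 (by omega))
    rcases hstepn with heq | hdrop
    · -- a n = a (n+1): the extra term 1/a(n+1) is absorbed into the first summand
      have hpos' : (0 : ℝ) < (a (n + 1) : ℝ) := by exact_mod_cast hposn1
      rw [heq] at ihh
      have : ((n : ℝ) + 1 + (a (n + 1) : ℝ) - k) / (a (n + 1) : ℝ)
          = ((n : ℝ) + (a (n + 1) : ℝ) - k) / (a (n + 1) : ℝ) + 1 / (a (n + 1) : ℝ) := by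
        field_simp
        ring
      push_cast
      push_cast at ihh
      rw [this]
      linarith
    · -- a n = a (n+1) + 1 : a genuine drop
      have hs1 : (0 : ℝ) < (a (n + 1) : ℝ) := by exact_mod_cast hposn1
      have hs2 : (0 : ℝ) < (a (n + 1) : ℝ) + 1 := by positivity
      have hiboteq : a n = a (n + 1) + 1 := hdrop
      have hsk : a (n + 1) + 1 ≤ k := by omega
      -- split off the bottom term of the Icc sum on the RHS
      have hsplit : ∑ v ∈ Icc (a (n + 1) + 1) k, (1 : ℝ) / (v : ℝ)
          = 1 / ((a (n + 1) : ℝ) + 1) + ∑ v ∈ Icc (a (n + 1) + 1 + 1) k, (1 : ℝ) / (v : ℝ) := by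
        rw [← Finset.add_sum_Ioc_eq_sum_Icc hsk, ← Finset.Icc_add_one_left_eq_Ioc]
        push_cast
        ring
      rw [hiboteq] at ihh
      rw [hsplit]
      have hD : (1 : ℝ) ≤ (n : ℝ) + ((a (n + 1) : ℝ) + 1) - k := by
        have : k + 1 ≤ a (n + 1) + 1 + n := by omega
        have := (Nat.cast_le (α := ℝ)).2 this
        push_cast at this
        linarith
      set D : ℝ := (n : ℝ) + ((a (n + 1) : ℝ) + 1) - k with hDdef
      have key : D / ((a (n + 1) : ℝ) + 1) + 1 / (a (n + 1) : ℝ)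
          ≤ D / (a (n + 1) : ℝ) + 1 / ((a (n + 1) : ℝ) + 1) := by
        rw [div_add_div _ _ (ne_of_gt hs2) (ne_of_gt hs1),
          div_add_div _ _ (ne_of_gt hs1) (ne_of_gt hs2),
          div_le_div_iff₀ (by positivity) (by positivity)]
        nlinarith [mul_pos hs1 hs2]
      have hgoal : ((n : ℝ) + 1 + (a (n + 1) : ℝ) - k) / (a (n + 1) : ℝ)
          = D / (a (n + 1) : ℝ) := by rw [hDdef]; ring_nf
      push_cast
      push_cast at ihh
      push_cast at hgoal
      rw [hgoal]
      linarith

/-- Harmonic-type bound: if `a 1 = k ≥ a 2 ≥ … ≥ a t > κ` are integers dropping by at most one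
at a time, then `Σ_{i=1}^{t} 1/aᵢ ≤ 1 + ln(k/(κ+1))`. -/
theorem harmonic_series_bound (k t κ : ℕ) (hk : 1 ≤ k) (ht : 1 ≤ t) (htk : t ≤ k)
    (a : ℕ → ℕ) (hmono : ∀ i j, 1 ≤ i → i ≤ j → j ≤ t → a j ≤ a i)
    (ha1 : a 1 = k) (hat : κ < a t)
    (hstep : ∀ i, 1 ≤ i → i < t → a i = a (i + 1) ∨ a i = a (i + 1) + 1) :
    ∑ i ∈ Finset.Icc 1 t, (1 : ℝ) / (a i : ℝ) ≤
      1 + Real.log ((k : ℝ) / ((κ : ℝ) + 1)) := by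
  have hpos : ∀ i, 1 ≤ i → i ≤ t → 1 ≤ a i := fun i h1 h2 =>
    le_trans (by omega) (hmono i t h1 h2 le_rfl)
  have hmain := aux_main k a ha1 t ht hmono hpos hstep
  have hatk : a t ≤ k := ha1 ▸ hmono 1 t le_rfl ht le_rfl
  have hat1 : 1 ≤ a t := hpos t ht le_rfl
  have hs : (0 : ℝ) < (a t : ℝ) := by exact_mod_cast hat1
  -- first term ≤ 1
  have h1 : ((t : ℝ) + (a t : ℝ) - (k : ℝ)) / (a t : ℝ) ≤ 1 := by
    rw [div_le_one hs]
    have : (t : ℝ) ≤ (k : ℝ) := by exact_mod_cast htk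
    linarith
  -- second term ≤ log(k/(κ+1))
  have h2 : ∑ v ∈ Icc (a t + 1) k, (1 : ℝ) / (v : ℝ)
      ≤ Real.log ((k : ℝ) / ((κ : ℝ) + 1)) := by
    have hlog := aux_log (a t) hat1 k hatk
    have hmonolog : Real.log ((κ : ℝ) + 1) ≤ Real.log (a t) := by
      apply Real.log_le_log (by positivity)
      exact_mod_cast hat
    rw [Real.log_div (by positivity) (by positivity)]
    linarith
  linarith
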